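/- Let G = (V, E) be a finite DAG, let v ∈ V, and let u_1, …, u_k be an enumeration without repetition of all out-neighbors of v that is consistent with reachability: whenever i ≠ j and there is a directed path from u_i to u_j, then i < j. Then for every i ∈ {1, …, k}, |Desc(u_i)| ≤ |Desc(v)| − i. -/
import Mathlib


open scoped Classical

/-- `descSet E v`: the set of descendants of `v`, i.e. vertices reachable from
`v` by a directed path of length ≥ 1 (in a DAG these are automatically ≠ `v`). -/
noncomputable def descSet {V : Type*} [Fintype V] (E : V → V → Prop) (v : V) : Finset V :=
  Finset.univ.filter (fun u => Relation.TransGen E v u)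

/-- Let `u 0, …, u (k-1)` be an enumeration without repetition of
all out-neighbors of `v`, consistent with reachability (if `i ≠ j` and there is
a directed path from `u i` to `u j` then `i < j`).  Then for every `i`,
`|Desc(u i)| ≤ |Desc(v)| − (i+1)` (stated additively, since the right-hand side
never underflows). -/
theorem stmt2 {V : Type*} [Fintype V] (E : V → V → Prop)
    (hacyc : ∀ v : V, ¬ Relation.TransGen E v v)
    (v : V) (k : ℕ) (u : Fin k → V)
    (hinj : Function.Injective u)
    (hrange : ∀ w : V, E v w ↔ ∃ i : Fin k, u i = w)
    (hord : ∀ i j : Fin k, i ≠ j → Relation.TransGen E (u i) (u j) → i < j)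
    (i : Fin k) :
    (descSet E (u i)).card + (i.val + 1) ≤ (descSet E v).card := by
  classical
  set D := descSet E (u i) with hD
  set T := (Finset.univ.filter (fun j : Fin k => j ≤ i)).image u with hT
  have hdisj : Disjoint D T := by
    rw [Finset.disjoint_right]
    intro x hx hxD
    simp only [hT, Finset.mem_image, Finset.mem_filter, Finset.mem_univ, true_and] at hx
    obtain ⟨j, hji, hj⟩ := hx
    simp only [hD, descSet, Finset.mem_filter, Finset.mem_univ, true_and] at hxD
    subst hj
    rcases eq_or_ne i j with h | h
    · exact hacyc _ (h ▸ hxD)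
    · exact absurd (hord i j h hxD) (not_lt.mpr hji)
  have hsub : D ∪ T ⊆ descSet E v := by
    intro x hx
    simp only [descSet, Finset.mem_filter, Finset.mem_univ, true_and]
    rcases Finset.mem_union.mp hx with h | h
    · simp only [hD, descSet, Finset.mem_filter, Finset.mem_univ, true_and] at h
      exact (Relation.TransGen.single ((hrange (u i)).mpr ⟨i, rfl⟩)).trans h
    · simp only [hT, Finset.mem_image, Finset.mem_filter, Finset.mem_univ, true_and] at h
      obtain ⟨j, _, hj⟩ := h
      exact hj ▸ Relation.TransGen.single ((hrange (u j)).mpr ⟨j, rfl⟩)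
  have hcardT : T.card = i.val + 1 := by
    rw [hT, Finset.card_image_of_injective _ hinj]
    have : Finset.univ.filter (fun j : Fin k => j ≤ i) = Finset.Iic i := by
      ext j; simp
    rw [this, Fin.card_Iic]
  calc D.card + (i.val + 1) = D.card + T.card := by rw [hcardT]
    _ = (D ∪ T).card := (Finset.card_union_of_disjoint hdisj).symm
    _ ≤ (descSet E v).card := Finset.card_le_card hsub
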